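/- Let Σ be a finite alphabet, w = (ā,τ̄) a timed word over Σ, {F_p}_{p∈I} a family of sets of timed words over Σ ⊔ {$} indexed by an arbitrary set I, and N ≥ 1 an integer such that every word in ⋃_{p∈I} (F_p)_{−$} has length at least N. Let i ≥ 1 be an index with i + N ≤ |w| and let m ∈ {1,…,N}. If a_{i+N} ≠ a′_{N−m+1} holds for every nonempty timed word (ā′,τ̄′) ∈ ⋃_{p∈I} F_p, then for every t₀ with τ_{i+m−1} ≤ t₀ < τ_{i+m}, every t′ > t₀, and every p ∈ I: w|_(t₀,t′) ∉ F_p. -/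
import Mathlib


open scoped Classical NNRat

namespace PTPM

/-- Timed words over an alphabet `α`: finite sequences of (letter, timestamp). -/
abbrev TWord (α : Type*) := List (α × ℝ)

/-- Well-formedness of a timed word: positive, strictly increasing timestamps. -/
def IsTW {α : Type*} (w : TWord α) : Prop :=
  (∀ p ∈ w, 0 < p.2) ∧ w.Chain' (fun p q => p.2 < q.2)

/-- `T(Σ)`: the set of timed words over `α`. -/
def TW (α : Type*) : Set (TWord α) := {w | IsTW w}

/-- `T^n(Σ)`: the set of timed words over `α` of length `n`. -/
def TWn (α : Type*) (n : ℕ) : Set (TWord α) := {w | IsTW w ∧ w.length = n}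

/-- The shift `w + s` of a timed word. -/
def shift {α : Type*} (w : TWord α) (s : ℝ) : TWord α := w.map fun p => (p.1, p.2 + s)

/-- Last timestamp of a timed word (`0` for the empty word). -/
def lastT {α : Type*} (w : TWord α) : ℝ := (w.getLast?.map Prod.snd).getD 0

/-- Non-absorbing concatenation `w · w'`. -/
def ncat {α : Type*} (w w' : TWord α) : TWord α := w ++ shift w' (lastT w)

/-- Non-absorbing concatenation lifted to sets of timed words. -/
def ncatS {α : Type*} (W W' : Set (TWord α)) : Set (TWord α) :=
  {u | ∃ w ∈ W, ∃ w' ∈ W', u = ncat w w'}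

/-- `τ_k`, the `k`-th timestamp (1-indexed), with `τ_0 = 0`. -/
def tau {α : Type*} (w : TWord α) (k : ℕ) : ℝ := lastT (w.take k)

/-- The subsequence `w(i,j)` (1-indexed, both inclusive; empty if `i > j`). -/
def sub {α : Type*} (w : TWord α) (i j : ℕ) : TWord α := (w.take j).drop (i - 1)

/-- Letter at position `k` (1-indexed), if any. -/
def letterAt {α : Type*} (w : TWord α) (k : ℕ) : Option α := w[k - 1]?.map Prod.fst

/-- Embedding of timed words over `Σ` into timed words over `Σ ⊔ {$}`;
the terminal character `$` is modelled by `none`. -/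
def liftW {α : Type*} (w : TWord α) : TWord (Option α) := w.map fun p => (some p.1, p.2)

/-- `T(Σ)` viewed inside the alphabet `Σ ⊔ {$}`. -/
def TWl (α : Type*) : Set (TWord (Option α)) := liftW '' TW α

/-- `T^n(Σ)` viewed inside the alphabet `Σ ⊔ {$}`. -/
def TWln (α : Type*) (n : ℕ) : Set (TWord (Option α)) := liftW '' TWn α n

/-- The segment `w|_(t,t')`, a timed word over `Σ ⊔ {$}`. -/
noncomputable def seg {α : Type*} (w : TWord α) (t t' : ℝ) : TWord (Option α) :=
  (w.filter fun p => decide (t < p.2 ∧ p.2 < t')).map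
      (fun p => ((some p.1 : Option α), p.2 - t))
    ++ [((none : Option α), t' - t)]

/-- `L_{-$}`: the words of `L` with the last element removed. -/
def minusDollar {β : Type*} (L : Set (TWord β)) : Set (TWord β) :=
  {u | ∃ x ∈ L, x ≠ [] ∧ u = x.dropLast}

/-- Untimed projection of a timed word. -/
def untimed {α : Type*} (w : TWord α) : List α := w.map Prod.fst

/-- Untimed projection of a set of timed words. -/
def untimedS {α : Type*} (W : Set (TWord α)) : Set (List α) := untimed '' W

/-- `U · Σ*`: the set of finite words having a prefix in `U`. -/
def prefSet {σ : Type*} (U : Set (List σ)) : Set (List σ) := {x | ∃ u ∈ U, ∃ s, x = u ++ s}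

/-- `Ŷ = {y + s | y ∈ Y, s ≥ 0}`. -/
def hatS {α : Type*} (Y : Set (TWord α)) : Set (TWord α) :=
  {u | ∃ y ∈ Y, ∃ s : ℝ, 0 ≤ s ∧ u = shift y s}

/-- Comparison operators `⋈ ∈ {<, ≤, =, ≥, >}`. -/
inductive Cmp | lt | le | eq | ge | gt

def Cmp.eval : Cmp → ℝ → ℝ → Prop
  | .lt, a, b => a < b
  | .le, a, b => a ≤ b
  | .eq, a, b => a = b
  | .ge, a, b => b ≤ a
  | .gt, a, b => b < a

/-- Atomic guard constraints `x ⋈ d` (`d ∈ ℕ`) and `x ⋈ p` (`p` a parameter). -/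
inductive Atom (C P : Type*)
  | nat (x : C) (op : Cmp) (d : ℕ)
  | par (x : C) (op : Cmp) (p : P)

/-- A guard: a finite conjunction of atomic constraints. -/
abbrev Guard (C P : Type*) := List (Atom C P)

def Atom.sat {C P : Type*} (μ : C → ℝ) (v : P → ℚ≥0) : Atom C P → Prop
  | .nat x op d => op.eval (μ x) (d : ℝ)
  | .par x op p => op.eval (μ x) ((v p : ℚ) : ℝ)

/-- `μ ⊨ v(g)`. -/
def Guard.sat {C P : Type*} (μ : C → ℝ) (v : P → ℚ≥0) (g : Guard C P) : Prop :=
  ∀ a ∈ g, a.sat μ v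

def Atom.mapCP {C P C' P' : Type*} (fc : C → C') (fp : P → P') : Atom C P → Atom C' P'
  | .nat x op d => .nat (fc x) op d
  | .par x op p => .par (fc x) op (fp p)

def Guard.mapCP {C P C' P' : Type*} (fc : C → C') (fp : P → P') (g : Guard C P) :
    Guard C' P' :=
  g.map (Atom.mapCP fc fp)

/-- Parametric timed automaton with alphabet `α`, locations `L`, clocks `C`, parameters `P`.
An edge `(ℓ, g, a, R, ℓ')` has source `ℓ`, guard `g`, action `a`, resets `R`, target `ℓ'`. -/
structure PTA (α L C P : Type*) where
  init : L
  acc : Set L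
  edges : Set (L × Guard C P × α × Set C × L)
  finEdges : edges.Finite

/-- Reset of the clocks in `R` to `0`. -/
noncomputable def resetv {C : Type*} (μ : C → ℝ) (R : Set C) : C → ℝ :=
  fun x => if x ∈ R then 0 else μ x

/-- `Steps A v ℓ μ τ w ℓ'`: from configuration (location `ℓ`, clock valuation `μ`,
absolute time `τ`) there is a run of `A[v]` reading the timed word `w` and ending in `ℓ'`. -/
inductive Steps {α L C P : Type*} (A : PTA α L C P) (v : P → ℚ≥0) :
    L → (C → ℝ) → ℝ → TWord α → L → Prop
  | refl (ℓ : L) (μ : C → ℝ) (τ : ℝ) : Steps A v ℓ μ τ [] ℓ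
  | step {ℓ : L} {μ : C → ℝ} {τ : ℝ} {g : Guard C P} {a : α} {R : Set C} {ℓ' ℓ'' : L}
      {d : ℝ} {w : TWord α}
      (hd : 0 ≤ d)
      (he : (ℓ, g, a, R, ℓ') ∈ A.edges)
      (hg : Guard.sat (fun x => μ x + d) v g)
      (h : Steps A v ℓ' (resetv (fun x => μ x + d) R) (τ + d) w ℓ'') :
      Steps A v ℓ μ τ ((a, τ + d) :: w) ℓ''

/-- The language `L(A[v])`: associated words of accepting runs that are timed words. -/
def lang {α L C P : Type*} (A : PTA α L C P) (v : P → ℚ≥0) : Set (TWord α) :=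
  {w | IsTW w ∧ ∃ ℓ ∈ A.acc, Steps A v A.init (fun _ => 0) 0 w ℓ}

/-- `A_ℓ`: the PTA `A` with accepting set `{ℓ}`. -/
def PTA.locAcc {α L C P : Type*} (A : PTA α L C P) (ℓ : L) : PTA α L C P :=
  { A with acc := {ℓ} }

/-- The match set `M(w, A)`. -/
def matchSet {α L C P : Type*} (w : TWord α) (A : PTA (Option α) L C P) :
    Set (ℝ × ℝ × (P → ℚ≥0)) :=
  {x | 0 ≤ x.1 ∧ x.1 < x.2.1 ∧ seg w x.1 x.2.1 ∈ lang A x.2.2}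

/-- `V_{ℓ,n}`. -/
def Vset {α L C P : Type*} (A : PTA (Option α) L C P) (ℓ : L) (n : ℕ) :
    Set (P → ℚ≥0) :=
  {v | ∃ v' : P → ℚ≥0,
    (ncatS (lang (A.locAcc ℓ) v) (TWl α) ∩
      ncatS (ncatS (TWln α n) (hatS (minusDollar (lang A v')))) (TWl α)).Nonempty}

/-- The KMP-style skip value `Δ_KMP(ℓ, V) = min {n ≥ 1 | V ⊆ V_{ℓ,n}}` (min ∅ = ⊤). -/
noncomputable def DeltaKMP {α L C P : Type*} (A : PTA (Option α) L C P) (ℓ : L)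
    (V : Set (P → ℚ≥0)) : ℕ∞ :=
  sInf ((fun n : ℕ => (n : ℕ∞)) '' {n : ℕ | 1 ≤ n ∧ V ⊆ Vset A ℓ n})

/-- The non-parametric KMP-style skip value `Δ'_KMP(ℓ) = min_v Δ_KMP(ℓ, {v})`. -/
noncomputable def DeltaKMP' {α L C P : Type*} (A : PTA (Option α) L C P) (ℓ : L) : ℕ∞ :=
  ⨅ v : P → ℚ≥0, DeltaKMP A ℓ {v}

/-- Untimed words over `Σ`, viewed inside `Σ ⊔ {$}`. -/
def pureW {α : Type*} (x : List (Option α)) : Prop := ∀ c ∈ x, c ≠ none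

/-- `Σ^n · U` for sets of finite untimed words. -/
def catLen {α : Type*} (n : ℕ) (U : Set (List (Option α))) : Set (List (Option α)) :=
  {y | ∃ x u, x.length = n ∧ pureW x ∧ u ∈ U ∧ y = x ++ u}

/-- `Σ^N a Σ*`: finite words of length at least `N+1` whose `(N+1)`-st letter is `a`. -/
def sigNa {α : Type*} (N : ℕ) (a : α) : Set (List (Option α)) :=
  {x | N + 1 ≤ x.length ∧ x[N]? = some (some a)}

/-- The Quick-Search-style skip value `Δ_QS(a)` (min ∅ = ⊤). -/
noncomputable def DeltaQS {α L C P : Type*} (A : PTA (Option α) L C P) (N : ℕ) (a : α) :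
    ℕ∞ :=
  sInf ((fun n : ℕ => (n : ℕ∞)) '' {n : ℕ | 1 ≤ n ∧ ∃ v : P → ℚ≥0,
    (sigNa N a ∩ catLen n (untimedS (minusDollar (lang A v)))).Nonempty})

lemma tau_eq_snd {α : Type*} {w : TWord α} {k : ℕ} (h1 : 1 ≤ k) (h2 : k ≤ w.length) :
    tau w k = (w[k - 1]'(by omega)).2 := by
  unfold tau lastT
  rw [List.getLast?_eq_getElem?]
  have hlen : (w.take k).length = k := by simp [min_eq_left h2]
  rw [hlen, List.getElem?_take, if_pos (by omega)]
  rw [List.getElem?_eq_getElem (by omega)]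
  rfl

lemma filter_eq_takeWhile_of_sorted {α : Type*} {l : List (α × ℝ)}
    (hl : l.Pairwise (fun p q => p.2 < q.2)) (t' : ℝ) :
    l.filter (fun p => decide (p.2 < t')) = l.takeWhile (fun p => decide (p.2 < t')) := by
  induction l with
  | nil => rfl
  | cons a l ih =>
    rcases List.pairwise_cons.mp hl with ⟨hall, htl⟩
    by_cases h : a.2 < t'
    · simp [List.filter_cons, List.takeWhile_cons, h, ih htl]
    · rw [List.takeWhile_cons_of_neg (by simpa using h),
        List.filter_cons_of_neg (by simpa using h)]
      rw [List.filter_eq_nil_iff.mpr]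
      intro x hx
      simp only [decide_eq_true_eq]
      have := hall x hx
      intro hx'
      exact h (by linarith)

/-- abstract Quick-Search-style skipping principle for families of
specifications. -/
theorem statement9 {α : Type*} [Finite α] {I : Type*} (w : TWord α) (hw : IsTW w)
    (F : I → Set (TWord (Option α)))
    (N : ℕ) (hN : 1 ≤ N)
    (hlen : ∀ p : I, ∀ u ∈ minusDollar (F p), N ≤ u.length)
    (i : ℕ) (hi : 1 ≤ i) (hiN : i + N ≤ w.length)
    (a : α) (ha : letterAt w (i + N) = some a)
    (m : ℕ) (hm : 1 ≤ m) (hmN : m ≤ N)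
    (hdiff : ∀ p : I, ∀ u ∈ F p, u ≠ [] → letterAt u (N - m + 1) ≠ some (some a)) :
    ∀ t₀ : ℝ, tau w (i + m - 1) ≤ t₀ → t₀ < tau w (i + m) →
      ∀ t' : ℝ, t₀ < t' → ∀ p : I, seg w t₀ t' ∉ F p := by
  intro t₀ ht₀l ht₀r t' ht' p hmem
  haveI : IsTrans (α × ℝ) (fun p q => p.2 < q.2) := ⟨fun _ _ _ h1 h2 => lt_trans h1 h2⟩
  have hp : w.Pairwise (fun p q => p.2 < q.2) := List.isChain_iff_pairwise.mp hw.2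
  have hmono : ∀ j k : ℕ, (hjk : j < k) → (hk : k < w.length) →
      (w[j]'(by omega)).2 < (w[k]'hk).2 := by
    intro j k hjk hk
    exact List.pairwise_iff_getElem.mp hp j k (by omega) hk hjk
  set n0 := i + m - 1 with hn0
  have hn0lt : n0 < w.length := by omega
  have hn01 : 1 ≤ n0 := by omega
  -- timestamps in the take part are ≤ t₀
  have htake : ∀ x ∈ w.take n0, x.2 ≤ t₀ := by
    intro x hx
    rcases List.mem_take_iff_getElem.mp hx with ⟨j, hj, rfl⟩
    have hjlt : j < n0 := by omega
    have h1 : (w[n0 - 1]'(by omega)).2 ≤ t₀ := by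
      have := tau_eq_snd (w := w) hn01 (le_of_lt hn0lt)
      rw [← this]; exact ht₀l
    rcases lt_or_eq_of_le (Nat.le_pred_of_lt hjlt) with hlt | heq
    · exact le_of_lt (lt_of_lt_of_le (hmono j (n0 - 1) hlt (by omega)) h1)
    · subst heq; exact h1
  -- timestamps in the drop part are > t₀
  have h1 : t₀ < (w[n0]'hn0lt).2 := by
    have h2 := tau_eq_snd (w := w) (k := i + m) (by omega) (by omega)
    rw [h2] at ht₀r
    convert ht₀r using 3
  have hdropgt : ∀ x ∈ w.drop n0, t₀ < x.2 := by
    intro x hx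
    rcases List.mem_iff_getElem.mp hx with ⟨j, hj, rfl⟩
    have hjlen : n0 + j < w.length := by
      simp only [List.length_drop] at hj; omega
    rw [List.getElem_drop]
    rcases Nat.eq_zero_or_pos j with rfl | hj0
    · simpa using h1
    · exact lt_trans h1 (hmono n0 (n0 + j) (by omega) hjlen)
  -- the filtered list
  set l := w.filter (fun q => decide (t₀ < q.2 ∧ q.2 < t')) with hl
  have hlsplit : l = (w.drop n0).filter (fun q => decide (q.2 < t')) := by
    conv_lhs => rw [hl, ← List.take_append_drop n0 w, List.filter_append]
    rw [List.filter_eq_nil_iff.mpr, List.nil_append]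
    · apply List.filter_congr
      intro x hx
      simp [hdropgt x hx]
    · intro x hx
      simp only [decide_eq_true_eq, not_and]
      intro h; exact absurd (htake x hx) (not_le.mpr h)
  have hdrop_pw : (w.drop n0).Pairwise (fun p q => p.2 < q.2) :=
    List.Pairwise.sublist (List.drop_sublist n0 w) hp
  have hltw : l = (w.drop n0).takeWhile (fun q => decide (q.2 < t')) := by
    rw [hlsplit]; exact filter_eq_takeWhile_of_sorted hdrop_pw t'
  -- u and its dropLast
  set u := seg w t₀ t' with hu
  have hne : u ≠ [] := by simp [hu, seg]
  have hdl : u.dropLast = l.map (fun q => ((some q.1 : Option α), q.2 - t₀)) := by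
    rw [hu]; unfold seg
    rw [List.dropLast_concat]
  have hlenN : N ≤ l.length := by
    have := hlen p u.dropLast ⟨u, hmem, hne, rfl⟩
    rwa [hdl, List.length_map] at this
  -- the key element
  have hNm : N - m < l.length := by omega
  have hpre : l <+: w.drop n0 := hltw ▸ List.takeWhile_prefix _
  have hNmd : N - m < (w.drop n0).length := by
    simp only [List.length_drop]; omega
  have hgetl : l[N - m]'hNm = (w.drop n0)[N - m]'hNmd := hpre.getElem hNm
  have hidx : n0 + (N - m) = i + N - 1 := by omega
  have hgetw : (w.drop n0)[N - m]'hNmd = w[i + N - 1]'(by omega) := by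
    rw [List.getElem_drop]
    congr 1
  -- letter at i+N of w is a
  have haw : (w[i + N - 1]'(by omega)).1 = a := by
    unfold letterAt at ha
    rw [List.getElem?_eq_getElem (by omega)] at ha
    simpa using ha
  -- contradiction via hdiff
  apply hdiff p u hmem hne
  unfold letterAt
  have hidx2 : N - m + 1 - 1 = N - m := by omega
  rw [hidx2, hu]
  unfold seg
  rw [List.getElem?_append_left (by rw [List.length_map]; exact hNm), List.getElem?_map,
    List.getElem?_eq_getElem hNm]
  simp only [Option.map_some, Option.some.injEq]
  have hfin : (l[N - m]'hNm).1 = a := by rw [hgetl, hgetw, haw]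
  exact hfin

end PTPM
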